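/- arXiv:1103.2023 — 2 statements merged into one kernel-verified Lean document; each statement's English description precedes it below -/
import Mathlib

section
/- The off-diagonal two-body contribution sum: with n_r as above, ((ω²−μ²)/√(ωμ)) · ∑_{r=0}^∞ √(n_r n_{r+1}) · (r+1)/2 = ((ω²−μ²)/(4μ)) · ((ω−μ)/(2ω)). -/
open Real

/-- The off-diagonal two-body contribution:
`((ω²−μ²)/√(ωμ)) ∑ᵣ √(nᵣ nᵣ₊₁) (r+1)/2 = ((ω²−μ²)/(4μ))((ω−μ)/(2ω))`. -/
theorem offdiagonal_two_body_sum (ω μ : ℝ) (hμ : 0 < μ) (hω : μ < ω)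
    (n : ℕ → ℝ)
    (hn : ∀ r, n r = (4 * Real.sqrt (ω * μ) / (Real.sqrt ω + Real.sqrt μ) ^ 2) *
        ((Real.sqrt ω - Real.sqrt μ) / (Real.sqrt ω + Real.sqrt μ)) ^ (2 * r)) :
    ((ω ^ 2 - μ ^ 2) / Real.sqrt (ω * μ)) *
        ∑' r : ℕ, Real.sqrt (n r * n (r + 1)) * ((r + 1) / 2) =
      ((ω ^ 2 - μ ^ 2) / (4 * μ)) * ((ω - μ) / (2 * ω)) := by
  have hω0 : 0 < ω := hμ.trans hω
  set s := Real.sqrt ω with hs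
  set t := Real.sqrt μ with ht
  have hs0 : 0 < s := Real.sqrt_pos.2 hω0
  have ht0 : 0 < t := Real.sqrt_pos.2 hμ
  have hts : t < s := Real.sqrt_lt_sqrt hμ.le hω
  have hst0 : 0 < s + t := by linarith
  have hsq : s ^ 2 = ω := Real.sq_sqrt hω0.le
  have htq : t ^ 2 = μ := Real.sq_sqrt hμ.le
  have hmul : Real.sqrt (ω * μ) = s * t := Real.sqrt_mul hω0.le μ
  set a := (s - t) / (s + t) with ha
  have ha0 : 0 < a := div_pos (by linarith) hst0
  have ha1 : a < 1 := by
    rw [div_lt_one hst0]; linarith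
  have ha2 : a ^ 2 < 1 := by nlinarith
  set C := 4 * (s * t) / (s + t) ^ 2 with hC
  have hC0 : 0 < C := div_pos (by positivity) (by positivity)
  -- the term simplifies
  have hterm : ∀ r : ℕ, Real.sqrt (n r * n (r + 1)) * ((r + 1) / 2)
      = (C * a / 2) * (((r : ℝ) * (a ^ 2) ^ r) + (a ^ 2) ^ r) := by
    intro r
    have h1 : n r * n (r + 1) = (C * a ^ (2 * r + 1)) ^ 2 := by
      rw [hn r, hn (r + 1), hmul]
      ring
    rw [h1, Real.sqrt_sq (by positivity)]
    have : a ^ (2 * r + 1) = a * (a ^ 2) ^ r := by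
      rw [← pow_mul]; ring
    rw [this]
    push_cast
    ring
  have hgeo : HasSum (fun r : ℕ => (a ^ 2) ^ r) (1 - a ^ 2)⁻¹ :=
    hasSum_geometric_of_lt_one (by positivity) ha2
  have hcoe : HasSum (fun r : ℕ => (r : ℝ) * (a ^ 2) ^ r) (a ^ 2 / (1 - a ^ 2) ^ 2) :=
    hasSum_coe_mul_geometric_of_norm_lt_one (by
      rw [Real.norm_eq_abs, abs_of_pos (by positivity)]; exact ha2)
  have hsum : HasSum (fun r : ℕ => Real.sqrt (n r * n (r + 1)) * ((r + 1) / 2))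
      ((C * a / 2) * (a ^ 2 / (1 - a ^ 2) ^ 2 + (1 - a ^ 2)⁻¹)) := by
    have := (hcoe.add hgeo).mul_left (C * a / 2)
    convert this using 2 with r
    · rfl
    exact hterm r
  rw [hsum.tsum_eq, hmul]
  have h1a : 1 - a ^ 2 = C := by
    rw [hC, ha]
    field_simp
    ring
  rw [h1a]
  have hC' : C ≠ 0 := ne_of_gt hC0
  have key : (C * a / 2) * (a ^ 2 / C ^ 2 + C⁻¹) = (ω - μ) / (8 * (s * t)) := by
    have hωμ : ω - μ = (s - t) * (s + t) := by nlinarith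
    rw [hωμ]
    field_simp [hC, ha]
    rw [hC, ha]
    field_simp
    ring
  rw [key]
  rw [← hsq, ← htq]
  have hst : s * t ≠ 0 := by positivity
  field_simp
  ring_nf
end

section
/- The Hartree–Fock energy of three-dimensional harmonium equals 3√((ω²+μ²)/2), i.e. (1/π⁶) ∫ (P²/2 + ω²R²/2 + p²/2 + μ²r²/2) e^{−(R²+r²)√((ω²+μ²)/2)} e^{−(P²+p²)/√((ω²+μ²)/2)} d³P d³R d³p d³r = 3√((ω²+μ²)/2). -/
open Real MeasureTheory

open Set

lemma my_tendsto_mul_gauss {b : ℝ} (hb : 0 < b) :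
    Filter.Tendsto (fun x : ℝ => x * rexp (-b * x ^ 2)) Filter.atTop (nhds 0) := by
  have h := (tendsto_rpow_mul_exp_neg_mul_atTop_nhds_zero (1/2) b hb).comp
    (Filter.tendsto_pow_atTop (α := ℝ) two_ne_zero)
  refine h.congr' ?_
  filter_upwards [Filter.eventually_ge_atTop (0:ℝ)] with x hx
  simp only [Function.comp_apply]
  rw [← Real.rpow_natCast x 2, ← Real.rpow_mul hx]
  norm_num

lemma my_integral_sq_gauss {b : ℝ} (hb : 0 < b) :
    ∫ x : ℝ, x ^ 2 * rexp (-b * x ^ 2) = Real.sqrt (π / b) / (2 * b) := by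
  have hint2 : Integrable (fun x : ℝ => x ^ 2 * rexp (-b * x ^ 2)) := by
    have := integrable_rpow_mul_exp_neg_mul_sq hb (show (-1:ℝ) < 2 by norm_num)
    refine this.congr ?_
    filter_upwards with x
    rw [Real.rpow_two]
  have hint0 : Integrable (fun x : ℝ => rexp (-b * x ^ 2)) := integrable_exp_neg_mul_sq hb
  have hIoi : (∫ x in Ioi (0:ℝ), (x ^ 2 * rexp (-b * x ^ 2) - (2*b)⁻¹ * rexp (-b * x ^ 2)))
      = 0 - (-(2*b))⁻¹ * 0 * rexp (-b * 0 ^ 2) := by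
    apply integral_Ioi_of_hasDerivAt_of_tendsto'
      (f := fun x => (-(2*b))⁻¹ * x * rexp (-b * x ^ 2))
    · intro x _
      have h1 : HasDerivAt (fun x : ℝ => rexp (-b * x ^ 2)) (-b * (2 * x) * rexp (-b * x ^ 2)) x := by
        have := ((hasDerivAt_pow 2 x).const_mul (-b)).exp
        simpa using this.congr_deriv (by ring)
      have h2 := ((hasDerivAt_id x).const_mul ((-(2*b))⁻¹)).mul h1
      refine h2.congr_deriv ?_
      field_simp
      simp only [id_eq]
      ring
    · exact ((hint2.sub (hint0.const_mul _)).integrableOn)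
    · have := (my_tendsto_mul_gauss hb).const_mul ((-(2*b))⁻¹)
      simpa [mul_assoc] using this
  have hIoi0 : (∫ x in Ioi (0:ℝ), x ^ 2 * rexp (-b * x ^ 2))
      = (2*b)⁻¹ * (Real.sqrt (π / b) / 2) := by
    have hsub := integral_sub (hint2.integrableOn) ((hint0.const_mul ((2*b)⁻¹)).integrableOn)
      (μ := volume.restrict (Ioi (0:ℝ)))
    rw [hIoi] at hsub
    have hg : (∫ x in Ioi (0:ℝ), (2*b)⁻¹ * rexp (-b * x ^ 2))
        = (2*b)⁻¹ * (Real.sqrt (π / b) / 2) := by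
      rw [MeasureTheory.integral_const_mul, integral_gaussian_Ioi]
    have h0 : (0:ℝ) - (-(2*b))⁻¹ * 0 * rexp (-b * 0 ^ 2) = 0 := by ring
    rw [h0] at hsub
    rw [← hg]
    linarith
  have habs : (∫ x : ℝ, x ^ 2 * rexp (-b * x ^ 2))
      = ∫ x : ℝ, |x| ^ 2 * rexp (-b * |x| ^ 2) := by
    congr 1; ext x; rw [sq_abs]
  rw [habs, integral_comp_abs (f := fun x => x ^ 2 * rexp (-b * x ^ 2)), hIoi0]
  field_simp

local notation "E3" => EuclideanSpace ℝ (Fin 3)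

lemma my_norm_sq_equiv (v : Fin 3 → ℝ) :
    ‖((MeasurableEquiv.toLp 2 (Fin 3 → ℝ)).symm).symm v‖ ^ 2 = ∑ i, v i ^ 2 := by
  simp only [MeasurableEquiv.symm_symm, MeasurableEquiv.toLp_apply,
    EuclideanSpace.norm_eq, PiLp.toLp_apply, Real.norm_eq_abs, sq_abs]
  rw [sq_sqrt]
  exact Finset.sum_nonneg fun i _ => by positivity

lemma my_integrable_gauss3 {c : ℝ} (hc : 0 < c) :
    Integrable (fun v : E3 => rexp (-c * ‖v‖ ^ 2)) := by
  have hm := EuclideanSpace.volume_preserving_symm_measurableEquiv_toLp (Fin 3)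
  rw [← MeasurePreserving.integrable_comp_emb hm.symm
    (MeasurableEquiv.measurableEmbedding _)]
  have : ((fun v : E3 => rexp (-c * ‖v‖ ^ 2)) ∘ ((MeasurableEquiv.toLp 2 (Fin 3 → ℝ)).symm).symm)
      = fun v : Fin 3 → ℝ => ∏ i, rexp (-c * v i ^ 2) := by
    ext v
    simp only [Function.comp_apply, my_norm_sq_equiv, Finset.mul_sum, neg_mul, ← Real.exp_sum,
      Finset.sum_neg_distrib]
  rw [this]
  exact Integrable.fintype_prod fun i => integrable_exp_neg_mul_sq hc

lemma my_integral_gauss3 {c : ℝ} (hc : 0 < c) :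
    ∫ v : E3, rexp (-c * ‖v‖ ^ 2) = (π / c) ^ ((3 : ℝ) / 2) := by
  rw [GaussianFourier.integral_rexp_neg_mul_sq_norm hc]
  norm_num

lemma my_sq_gauss3_eq {c : ℝ} (j : Fin 3) :
    (fun v : Fin 3 → ℝ => v j ^ 2 * ∏ i, rexp (-c * v i ^ 2))
      = fun v : Fin 3 → ℝ => ∏ i, ((if i = j then v i ^ 2 else 1) * rexp (-c * v i ^ 2)) := by
  ext v
  rw [Finset.prod_mul_distrib, Finset.prod_ite_eq' Finset.univ j (fun i => v i ^ 2)]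
  simp

lemma my_integrable_piece {c : ℝ} (hc : 0 < c) (j : Fin 3) :
    Integrable (fun v : Fin 3 → ℝ => v j ^ 2 * ∏ i, rexp (-c * v i ^ 2)) := by
  rw [my_sq_gauss3_eq]
  refine Integrable.fintype_prod
    (f := fun i (x : ℝ) => (if i = j then x ^ 2 else 1) * rexp (-c * x ^ 2)) fun i => ?_
  by_cases h : i = j
  · simp only [h, if_pos rfl, if_true]
    have := integrable_rpow_mul_exp_neg_mul_sq hc (show (-1:ℝ) < 2 by norm_num)
    refine this.congr ?_
    filter_upwards with x
    rw [Real.rpow_two]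
  · simp only [if_neg h, one_mul]
    exact integrable_exp_neg_mul_sq hc

lemma my_integrable_sq_gauss3 {c : ℝ} (hc : 0 < c) :
    Integrable (fun v : E3 => ‖v‖ ^ 2 * rexp (-c * ‖v‖ ^ 2)) := by
  have hm := EuclideanSpace.volume_preserving_symm_measurableEquiv_toLp (Fin 3)
  rw [← MeasurePreserving.integrable_comp_emb hm.symm
    (MeasurableEquiv.measurableEmbedding _)]
  have : ((fun v : E3 => ‖v‖ ^ 2 * rexp (-c * ‖v‖ ^ 2))
        ∘ ((MeasurableEquiv.toLp 2 (Fin 3 → ℝ)).symm).symm)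
      = fun v : Fin 3 → ℝ => ∑ j, (v j ^ 2 * ∏ i, rexp (-c * v i ^ 2)) := by
    ext v
    simp only [Function.comp_apply, my_norm_sq_equiv, Finset.mul_sum, neg_mul, ← Real.exp_sum,
      Finset.sum_neg_distrib, Finset.sum_mul]
  rw [this]
  exact integrable_finset_sum _ fun j _ => my_integrable_piece hc j

lemma my_integral_sq_gauss3 {c : ℝ} (hc : 0 < c) :
    ∫ v : E3, ‖v‖ ^ 2 * rexp (-c * ‖v‖ ^ 2) = 3 / (2 * c) * (π / c) ^ ((3 : ℝ) / 2) := by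
  have hm := (EuclideanSpace.volume_preserving_symm_measurableEquiv_toLp (Fin 3)).symm
  rw [← hm.integral_comp (MeasurableEquiv.measurableEmbedding _)]
  have heq : ((fun v : E3 => ‖v‖ ^ 2 * rexp (-c * ‖v‖ ^ 2))
        ∘ ((MeasurableEquiv.toLp 2 (Fin 3 → ℝ)).symm).symm)
      = fun v : Fin 3 → ℝ => ∑ j, (v j ^ 2 * ∏ i, rexp (-c * v i ^ 2)) := by
    ext v
    simp only [Function.comp_apply, my_norm_sq_equiv, Finset.mul_sum, neg_mul, ← Real.exp_sum,
      Finset.sum_neg_distrib, Finset.sum_mul]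
  have heq2 : ∀ v : Fin 3 → ℝ, (∑ i, v i ^ 2) * rexp (-c * ∑ i, v i ^ 2)
      = ∑ j, (v j ^ 2 * ∏ i, rexp (-c * v i ^ 2)) := by
    intro v
    have h3 : rexp (-c * ∑ i, v i ^ 2) = ∏ i, rexp (-c * v i ^ 2) := by
      rw [← Real.exp_sum]
      congr 1
      rw [Finset.mul_sum]
    rw [h3, Finset.sum_mul]
  simp only [Function.comp_apply, my_norm_sq_equiv]
  simp_rw [heq2]
  rw [integral_finset_sum _ fun j _ => my_integrable_piece hc j]
  have hterm : ∀ j : Fin 3, (∫ v : Fin 3 → ℝ, v j ^ 2 * ∏ i, rexp (-c * v i ^ 2))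
      = (Real.sqrt (π / c) / (2 * c)) * Real.sqrt (π / c) ^ 2 := by
    intro j
    rw [my_sq_gauss3_eq,
      integral_fintype_prod_volume_eq_prod (f := fun i (x : ℝ) => (if i = j then x ^ 2 else 1) * rexp (-c * x ^ 2))]
    have hval : ∀ i : Fin 3, (∫ x : ℝ, (if i = j then x ^ 2 else 1) * rexp (-c * x ^ 2))
        = if i = j then Real.sqrt (π / c) / (2 * c) else Real.sqrt (π / c) := by
      intro i
      by_cases h : i = j
      · simp only [h, if_pos rfl]
        exact my_integral_sq_gauss hc
      · simp only [if_neg h, one_mul]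
        rw [integral_gaussian]
    simp_rw [hval]
    rw [← Finset.mul_prod_erase _ _ (Finset.mem_univ j), if_pos rfl,
      Finset.prod_congr rfl (fun i hi => if_neg (Finset.ne_of_mem_erase hi)),
      Finset.prod_const, Finset.card_erase_of_mem (Finset.mem_univ j)]
    norm_num
  simp_rw [hterm]
  rw [Finset.sum_const]
  simp only [Finset.card_univ, Fintype.card_fin, nsmul_eq_mul, Nat.cast_ofNat]
  have h1 : Real.sqrt (π / c) ^ 2 = π / c := Real.sq_sqrt (by positivity)
  rw [show (3:ℝ)/2 = 1 + 1/2 by norm_num, Real.rpow_add (by positivity), Real.rpow_one,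
    ← Real.sqrt_eq_rpow, h1]
  ring

/-- The Hartree–Fock energy of three-dimensional harmonium equals
`3√((ω²+μ²)/2)`. -/
theorem hartree_fock_energy (ω μ : ℝ) (hω : 0 < ω) (hμ : 0 < μ) :
    (1 / Real.pi ^ 6) *
      ∫ x : EuclideanSpace ℝ (Fin 3) × EuclideanSpace ℝ (Fin 3) ×
             EuclideanSpace ℝ (Fin 3) × EuclideanSpace ℝ (Fin 3),
        (‖x.1‖ ^ 2 / 2 + ω ^ 2 * ‖x.2.1‖ ^ 2 / 2 +
          ‖x.2.2.1‖ ^ 2 / 2 + μ ^ 2 * ‖x.2.2.2‖ ^ 2 / 2) *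
          Real.exp (-(‖x.2.1‖ ^ 2 + ‖x.2.2.2‖ ^ 2) * Real.sqrt ((ω ^ 2 + μ ^ 2) / 2)) *
          Real.exp (-(‖x.1‖ ^ 2 + ‖x.2.2.1‖ ^ 2) / Real.sqrt ((ω ^ 2 + μ ^ 2) / 2)) =
    3 * Real.sqrt ((ω ^ 2 + μ ^ 2) / 2) := by
  set s : ℝ := Real.sqrt ((ω ^ 2 + μ ^ 2) / 2) with hsdef
  have hs : 0 < s := Real.sqrt_pos.mpr (by positivity)
  have hs2 : s ^ 2 = (ω ^ 2 + μ ^ 2) / 2 := Real.sq_sqrt (by positivity)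
  have ht : 0 < 1 / s := by positivity
  -- abbreviations
  set gs : E3 → ℝ := fun v => rexp (-s * ‖v‖ ^ 2) with hgs
  set gt : E3 → ℝ := fun v => rexp (-(1 / s) * ‖v‖ ^ 2) with hgt
  set qs : E3 → ℝ := fun v => ‖v‖ ^ 2 * rexp (-s * ‖v‖ ^ 2) with hqs
  set qt : E3 → ℝ := fun v => ‖v‖ ^ 2 * rexp (-(1 / s) * ‖v‖ ^ 2) with hqt
  have igs : Integrable gs := my_integrable_gauss3 hs
  have igt : Integrable gt := my_integrable_gauss3 ht
  have iqs : Integrable qs := my_integrable_sq_gauss3 hs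
  have iqt : Integrable qt := my_integrable_sq_gauss3 ht
  haveI sf2 : SFinite (volume : Measure (E3 × E3)) := by
    rw [Measure.volume_eq_prod]; infer_instance
  haveI sf3 : SFinite (volume : Measure (E3 × E3 × E3)) := by
    rw [Measure.volume_eq_prod]; infer_instance
  have key : ∀ (f g h k : E3 → ℝ),
      (∫ x : E3 × E3 × E3 × E3, f x.1 * (g x.2.1 * (h x.2.2.1 * k x.2.2.2)))
        = (∫ v, f v) * ((∫ v, g v) * ((∫ v, h v) * (∫ v, k v))) := by
    intro f g h k
    rw [Measure.volume_eq_prod, integral_prod_mul (f := f)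
      (g := fun y : E3 × E3 × E3 => g y.1 * (h y.2.1 * k y.2.2))]
    rw [Measure.volume_eq_prod, integral_prod_mul (f := g)
      (g := fun y : E3 × E3 => h y.1 * k y.2)]
    rw [Measure.volume_eq_prod, integral_prod_mul (f := h) (g := k)]
  have keyInt : ∀ {f g h k : E3 → ℝ}, Integrable f → Integrable g → Integrable h →
      Integrable k →
      Integrable (fun x : E3 × E3 × E3 × E3 => f x.1 * (g x.2.1 * (h x.2.2.1 * k x.2.2.2))) := by
    intro f g h k hf hg hh hk
    rw [Measure.volume_eq_prod]
    refine Integrable.mul_prod hf (g := fun y : E3 × E3 × E3 => g y.1 * (h y.2.1 * k y.2.2)) ?_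
    rw [Measure.volume_eq_prod]
    refine Integrable.mul_prod hg (g := fun y : E3 × E3 => h y.1 * k y.2) ?_
    rw [Measure.volume_eq_prod]
    exact hh.mul_prod hk
  have hpt : ∀ x : E3 × E3 × E3 × E3,
      (‖x.1‖ ^ 2 / 2 + ω ^ 2 * ‖x.2.1‖ ^ 2 / 2 +
          ‖x.2.2.1‖ ^ 2 / 2 + μ ^ 2 * ‖x.2.2.2‖ ^ 2 / 2) *
          Real.exp (-(‖x.2.1‖ ^ 2 + ‖x.2.2.2‖ ^ 2) * s) *
          Real.exp (-(‖x.1‖ ^ 2 + ‖x.2.2.1‖ ^ 2) / s)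
      = (1/2) * (qt x.1 * (gs x.2.1 * (gt x.2.2.1 * gs x.2.2.2)))
        + (ω ^ 2 / 2) * (gt x.1 * (qs x.2.1 * (gt x.2.2.1 * gs x.2.2.2)))
        + (1/2) * (gt x.1 * (gs x.2.1 * (qt x.2.2.1 * gs x.2.2.2)))
        + (μ ^ 2 / 2) * (gt x.1 * (gs x.2.1 * (gt x.2.2.1 * qs x.2.2.2))) := by
    intro x
    simp only [hgs, hgt, hqs, hqt]
    rw [show -(‖x.2.1‖ ^ 2 + ‖x.2.2.2‖ ^ 2) * s = (-s * ‖x.2.1‖ ^ 2) + (-s * ‖x.2.2.2‖ ^ 2) by ring,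
      Real.exp_add,
      show -(‖x.1‖ ^ 2 + ‖x.2.2.1‖ ^ 2) / s
          = (-(1/s) * ‖x.1‖ ^ 2) + (-(1/s) * ‖x.2.2.1‖ ^ 2) by ring,
      Real.exp_add]
    ring
  have intsum : ∀ (f g h k : E3 × E3 × E3 × E3 → ℝ), Integrable f → Integrable g →
      Integrable h → Integrable k →
      (∫ x, (f x + g x + h x + k x)) = (∫ x, f x) + (∫ x, g x) + (∫ x, h x) + (∫ x, k x) := by
    intro f g h k hf hg hh hk
    have h1 : Integrable (fun x => f x + g x) := hf.add hg
    have h2 : Integrable (fun x => f x + g x + h x) := h1.add hh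
    rw [integral_add h2 hk, integral_add h1 hh, integral_add hf hg]
  simp only [hpt]
  rw [intsum _ _ _ _ ((keyInt iqt igs igt igs).const_mul _)
    ((keyInt igt iqs igt igs).const_mul _) ((keyInt igt igs iqt igs).const_mul _)
    ((keyInt igt igs igt iqs).const_mul _)]
  rw [integral_const_mul, integral_const_mul, integral_const_mul, integral_const_mul]
  rw [key qt gs gt gs, key gt qs gt gs, key gt gs qt gs, key gt gs gt qs]
  rw [show (∫ v, gs v) = ∫ v : E3, rexp (-s * ‖v‖ ^ 2) from rfl,
    show (∫ v, gt v) = ∫ v : E3, rexp (-(1/s) * ‖v‖ ^ 2) from rfl,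
    show (∫ v, qs v) = ∫ v : E3, ‖v‖ ^ 2 * rexp (-s * ‖v‖ ^ 2) from rfl,
    show (∫ v, qt v) = ∫ v : E3, ‖v‖ ^ 2 * rexp (-(1/s) * ‖v‖ ^ 2) from rfl,
    my_integral_gauss3 hs, my_integral_gauss3 ht, my_integral_sq_gauss3 hs,
    my_integral_sq_gauss3 ht]
  set A : ℝ := (π / s) ^ ((3:ℝ) / 2) with hAdef
  set B : ℝ := (π / (1 / s)) ^ ((3:ℝ) / 2) with hBdef
  have hAB : A * B = π ^ 3 := by
    rw [hAdef, hBdef, ← Real.mul_rpow (by positivity) (by positivity),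
      show π / s * (π / (1 / s)) = π ^ 2 by field_simp,
      ← Real.rpow_natCast π 2, ← Real.rpow_mul Real.pi_pos.le]
    norm_num
  have hω2 : ω ^ 2 + μ ^ 2 = 2 * s ^ 2 := by rw [hs2]; ring
  have hQ2 : (A * B) ^ 2 = π ^ 6 := by rw [hAB]; ring
  have hπ : (π : ℝ) ≠ 0 := Real.pi_ne_zero
  have hsne : s ≠ 0 := hs.ne'
  field_simp
  linear_combination A^2*B^2*hω2 + 4*s^2*hQ2
end
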